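/- Let M be the DFA over Σ = {a,b,c,d} with states {0,…,m−1} (m ≥ 2), initial state 0, final state m−1, where a is the cyclic shift i ↦ i+1 mod m, b fixes 0,…,m−2 and sends m−1 to m−2, c swaps m−2 and m−1 fixing others, and d is the identity. Then the subset-construction DFA A for L(M)^R, with initial state {m−1}, is minimal: all 2^m subsets of {0,…,m−1} are reachable from {m−1}, and any two distinct subsets are distinguishable. -/

import Mathlib

open Computability

/-- The reversal of a language. -/
def revLang {α : Type} (L : Language α) : Language α := {w | w.reverse ∈ L}

/-- The witness DFA `M` over Σ = {a,b,c,d} with m+2 states {0,…,m+1} (so m+2 ≥ 2),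
    initial state 0, final state m+1, where a is the cyclic shift i ↦ i+1 mod (m+2),
    b fixes 0,…,m and sends m+1 to m, c swaps m and m+1 fixing the others, and d is the
    identity. (Here the paper's "m" is `m + 2`, "m−1" is `m+1` and "m−2" is `m`.) -/
def witnessM (m : ℕ) : DFA (Fin 4) (Fin (m + 2)) where
  step i l :=
    if l = 0 then ⟨(i.val + 1) % (m + 2), Nat.mod_lt _ (by omega)⟩
    else if l = 1 then (if i.val = m + 1 then ⟨m, by omega⟩ else i)
    else if l = 2 then
      (if i.val = m then ⟨m + 1, by omega⟩
       else if i.val = m + 1 then ⟨m, by omega⟩ else i)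
    else i
  start := ⟨0, by omega⟩
  accept := {⟨m + 1, by omega⟩}

/-- The subset-construction DFA `A` for L(M)^R: states are subsets, initial state {m+1},
    transitions δ_A(S, e) = {j : δ_M(j, e) ∈ S}, final states the subsets containing 0. -/
def witnessA (m : ℕ) : DFA (Fin 4) (Finset (Fin (m + 2))) where
  step S l := Finset.univ.filter (fun j => (witnessM m).step j l ∈ S)
  start := {⟨m + 1, by omega⟩}
  accept := {S | (⟨0, by omega⟩ : Fin (m + 2)) ∈ S}

open Fin.CommRing Fin.NatCast

/-- The subset-construction DFA `A` accepts L(M)^R and is minimal: every one of the 2^(m+2)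
    subsets is reachable from the initial state {m+1}, and any two distinct subsets are
    distinguishable. -/

lemma stepM_zero (m : ℕ) (x : Fin (m+2)) : (witnessM m).step x 0 = x + 1 := by
  simp [witnessM, Fin.add_def, Fin.val_one]

lemma stepM_one (m : ℕ) (x : Fin (m+2)) :
    (witnessM m).step x 1 = if x = ⟨m+1, by omega⟩ then ⟨m, by omega⟩ else x := by
  simp [witnessM, Fin.ext_iff, -Fin.val_eq_zero_iff]

lemma stepM_two (m : ℕ) (x : Fin (m+2)) :
    (witnessM m).step x 2 = if x = ⟨m, by omega⟩ then ⟨m+1, by omega⟩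
      else if x = ⟨m+1, by omega⟩ then ⟨m, by omega⟩ else x := by
  simp [witnessM, Fin.ext_iff, -Fin.val_eq_zero_iff]

lemma mem_stepA (m : ℕ) (S : Finset (Fin (m+2))) (l : Fin 4) (j : Fin (m+2)) :
    j ∈ (witnessA m).step S l ↔ (witnessM m).step j l ∈ S := by
  simp [witnessA]

def Reach (m : ℕ) (S : Finset (Fin (m+2))) : Prop := ∃ w, (witnessA m).eval w = S

lemma reach_step {m : ℕ} {S : Finset (Fin (m+2))} (h : Reach m S) (l : Fin 4) :
    Reach m ((witnessA m).step S l) := by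
  obtain ⟨w, hw⟩ := h
  exact ⟨w ++ [l], by rw [DFA.eval, DFA.evalFrom_append_singleton, ← DFA.eval, hw]⟩

def sh (m : ℕ) (t : Fin (m+2)) (S : Finset (Fin (m+2))) : Finset (Fin (m+2)) :=
  Finset.univ.filter (fun j => j + t ∈ S)

lemma mem_sh {m : ℕ} {t : Fin (m+2)} {S : Finset (Fin (m+2))} {j : Fin (m+2)} :
    j ∈ sh m t S ↔ j + t ∈ S := by simp [sh]

lemma reach_sh {m : ℕ} {S : Finset (Fin (m+2))} (h : Reach m S) (t : Fin (m+2)) :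
    Reach m (sh m t S) := by
  have key : ∀ k : ℕ, Reach m (sh m (k : Fin (m+2)) S) := by
    intro k
    induction k with
    | zero =>
      have : sh m ((0:ℕ) : Fin (m+2)) S = S := by
        ext j; rw [mem_sh]; norm_num
      rw [this]; exact h
    | succ k ih =>
      have : sh m ((k+1 : ℕ) : Fin (m+2)) S = (witnessA m).step (sh m (k : Fin (m+2)) S) 0 := by
        ext j
        rw [mem_stepA, stepM_zero, mem_sh, mem_sh]
        have : j + 1 + (k : Fin (m+2)) = j + ((k+1 : ℕ) : Fin (m+2)) := by push_cast; ring
        rw [this]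
      rw [this]; exact reach_step ih 0
  have := key t.val
  rwa [Fin.cast_val_eq_self] at this

lemma fin_one_ne_zero (m : ℕ) : (1 : Fin (m+2)) ≠ 0 := by
  intro h
  have := congrArg Fin.val h
  simp [Fin.val_one] at this

lemma st_add_one (m : ℕ) : (⟨m, by omega⟩ : Fin (m+2)) + 1 = ⟨m+1, by omega⟩ := by
  apply Fin.ext
  simp only [Fin.add_def, Fin.val_one]
  exact Nat.mod_eq_of_lt (by omega)

lemma sh_step_sh (m : ℕ) (t : Fin (m+2)) (l : Fin 4) (S : Finset (Fin (m+2))) :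
    sh m (-t) ((witnessA m).step (sh m t S) l) =
      Finset.univ.filter (fun j => (witnessM m).step (j - t) l + t ∈ S) := by
  ext j
  simp [mem_sh, mem_stepA, sub_eq_add_neg]

lemma reach_conj {m : ℕ} {S : Finset (Fin (m+2))} (h : Reach m S) (t : Fin (m+2)) (l : Fin 4) :
    Reach m (Finset.univ.filter (fun j => (witnessM m).step (j - t) l + t ∈ S)) := by
  rw [← sh_step_sh]
  exact reach_sh (reach_step (reach_sh h t) l) (-t)

lemma reach_insert {m : ℕ} {S : Finset (Fin (m+2))} {p : Fin (m+2)}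
    (hp : p ∈ S) (_hq : p + 1 ∉ S) (h : Reach m S) : Reach m (insert (p+1) S) := by
  set st : Fin (m+2) := ⟨m, by omega⟩ with hst
  set tp : Fin (m+2) := ⟨m+1, by omega⟩ with htp
  have hst1 : st + 1 = tp := st_add_one m
  set t : Fin (m+2) := p - st with ht
  have key : insert (p+1) S
      = Finset.univ.filter (fun j => (witnessM m).step (j - t) 1 + t ∈ S) := by
    ext j
    rw [Finset.mem_insert, Finset.mem_filter, stepM_one, ← htp, ← hst]
    by_cases hj : j = p + 1
    · have h1 : j - t = tp := by rw [hj, ht, ← hst1]; ring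
      rw [if_pos h1]
      have h2 : st + t = p := by rw [ht]; ring
      simp [hj, h2, hp]
    · have h1 : j - t ≠ tp := by
        intro hc
        apply hj
        have : j = tp + t := by rw [← hc]; ring
        rw [this, ← hst1, ht]; ring
      rw [if_neg h1]
      have h2 : j - t + t = j := by ring
      simp [h2, hj]
  rw [key]
  exact reach_conj h t 1

lemma reach_transp {m : ℕ} {S : Finset (Fin (m+2))} (p : Fin (m+2)) (h : Reach m S) :
    Reach m (Finset.univ.filter
      (fun j => (if j = p then p + 1 else if j = p + 1 then p else j) ∈ S)) := by
  set st : Fin (m+2) := ⟨m, by omega⟩ with hst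
  set tp : Fin (m+2) := ⟨m+1, by omega⟩ with htp
  have hst1 : st + 1 = tp := st_add_one m
  have hstp : st ≠ tp := by simp [hst, htp, Fin.ext_iff]
  have hp1 : p ≠ p + 1 := by
    intro hc
    have h0 : (0 : Fin (m+2)) = 1 := by linear_combination hc
    exact fin_one_ne_zero m h0.symm
  set t : Fin (m+2) := p - st with ht
  have key : Finset.univ.filter
      (fun j => (if j = p then p + 1 else if j = p + 1 then p else j) ∈ S)
      = Finset.univ.filter (fun j => (witnessM m).step (j - t) 2 + t ∈ S) := by
    ext j
    rw [Finset.mem_filter, Finset.mem_filter, stepM_two, ← htp, ← hst]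
    have e1 : j - t = st ↔ j = p := by
      constructor <;> intro hc
      · have : j = st + t := by rw [← hc]; ring
        rw [this, ht]; ring
      · rw [hc, ht]; ring_nf
    have e2 : j - t = tp ↔ j = p + 1 := by
      constructor <;> intro hc
      · have : j = tp + t := by rw [← hc]; ring
        rw [this, ← hst1, ht]; ring
      · rw [hc, ← hst1, ht]; ring_nf
    by_cases h1 : j = p
    · rw [if_pos h1, if_pos (e1.2 h1)]
      have : tp + t = p + 1 := by rw [← hst1, ht]; ring
      rw [this]
    · rw [if_neg h1, if_neg (fun hc => h1 (e1.1 hc))]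
      by_cases h2 : j = p + 1
      · rw [if_pos h2, if_pos (e2.2 h2)]
        have : st + t = p := by rw [ht]; ring
        rw [this]
      · rw [if_neg h2, if_neg (fun hc => h2 (e2.1 hc))]
        have : j - t + t = j := by ring
        rw [this]
  rw [key]
  exact reach_conj h t 2

lemma reach_start (m : ℕ) : Reach m {⟨m+1, by omega⟩} := ⟨[], rfl⟩

lemma reach_empty (m : ℕ) : Reach m (∅ : Finset (Fin (m+2))) := by
  have h := reach_step (reach_start m) 1
  have : (witnessA m).step {⟨m+1, by omega⟩} 1 = (∅ : Finset (Fin (m+2))) := by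
    ext j
    rw [mem_stepA, stepM_one]
    simp only [Finset.mem_singleton, Finset.notMem_empty, iff_false]
    by_cases hj : j = ⟨m+1, by omega⟩
    · rw [if_pos hj]
      simp [Fin.ext_iff]
    · rw [if_neg hj]
      exact hj
  rwa [this] at h

lemma reach_singleton (m : ℕ) (x : Fin (m+2)) : Reach m {x} := by
  have h := reach_sh (reach_start m) (⟨m+1, by omega⟩ - x)
  have : sh m (⟨m+1, by omega⟩ - x) {⟨m+1, by omega⟩} = {x} := by
    ext j
    rw [mem_sh, Finset.mem_singleton, Finset.mem_singleton]
    constructor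
    · intro hc
      linear_combination hc
    · intro hc
      rw [hc]; ring
  rwa [this] at h

lemma add_back {m : ℕ} : ∀ (d : ℕ) (T : Finset (Fin (m+2))) (x : Fin (m+2)),
    Reach m T → x ∉ T → x - ((d : Fin (m+2)) + 1) ∈ T → Reach m (insert x T) := by
  intro d
  induction d with
  | zero =>
    intro T x hT hx hd
    simp only [Nat.cast_zero, zero_add] at hd
    have h := reach_insert hd (by rwa [sub_add_cancel]) hT
    rwa [sub_add_cancel] at h
  | succ d ih =>
    intro T x hT hx hd
    by_cases h1 : x - 1 ∈ T
    · have h := reach_insert h1 (by rwa [sub_add_cancel]) hT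
      rwa [sub_add_cancel] at h
    · have hprev : Reach m (insert (x - 1) T) := by
        apply ih T (x - 1) hT h1
        have e : x - 1 - ((d : Fin (m+2)) + 1) = x - (((d : ℕ) + 1 : ℕ) + 1) := by
          push_cast; ring
        rw [e]; exact hd
      have h := reach_transp (x - 1) hprev
      have key : Finset.univ.filter
          (fun j => (if j = x - 1 then x - 1 + 1 else if j = x - 1 + 1 then x - 1 else j)
            ∈ insert (x - 1) T) = insert x T := by
        have hx1 : x - 1 + 1 = x := by ring
        have hne : x - 1 ≠ x := by
          intro hc
          have h0 : (0 : Fin (m+2)) = 1 := by linear_combination hc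
          exact fin_one_ne_zero m h0.symm
        ext j
        rw [Finset.mem_filter, Finset.mem_insert, hx1]
        by_cases hj1 : j = x - 1
        · rw [if_pos hj1]
          simp only [Finset.mem_insert]
          constructor
          · rintro ⟨-, hc | hc⟩
            · exact absurd hc.symm hne
            · exact absurd hc hx
          · rintro (hc | hc)
            · exact absurd (hj1 ▸ hc : x - 1 = x) hne
            · exact absurd (hj1 ▸ hc) h1
        · rw [if_neg hj1]
          by_cases hj2 : j = x
          · rw [if_pos hj2]
            simp [hj2, Finset.mem_insert]
          · rw [if_neg hj2]
            simp only [Finset.mem_insert, Finset.mem_univ, true_and]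
            constructor
            · rintro (hc | hc)
              · exact absurd hc hj1
              · exact Or.inr hc
            · rintro (hc | hc)
              · exact absurd hc hj2
              · exact Or.inr hc
      rwa [key] at h

theorem reach_all (m : ℕ) (S : Finset (Fin (m+2))) : Reach m S := by
  induction S using Finset.strongInduction with
  | _ S ih =>
    rcases S.eq_empty_or_nonempty with h | ⟨x, hx⟩
    · rw [h]; exact reach_empty m
    · rcases (S.erase x).eq_empty_or_nonempty with h1 | ⟨y, hy⟩
      · have : S = {x} := by
          apply Finset.eq_singleton_iff_unique_mem.2
          refine ⟨hx, fun z hz => ?_⟩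
          by_contra hzx
          exact (Finset.notMem_empty z) (h1 ▸ Finset.mem_erase.2 ⟨hzx, hz⟩)
        rw [this]; exact reach_singleton m x
      · have hT : Reach m (S.erase x) := ih _ (Finset.erase_ssubset hx)
        have hyx : y ≠ x := (Finset.mem_erase.1 hy).1
        have hxy : x - y ≠ 0 := by
          intro hc
          have : y = x := by linear_combination -hc
          exact hyx this
        set d : ℕ := (x - y).val - 1 with hd
        have hval : (x - y).val ≠ 0 := fun hc => hxy (Fin.ext hc)
        have hcast : ((d : Fin (m+2)) + 1) = x - y := by
          have : ((d : ℕ) + 1 : ℕ) = (x - y).val := by omega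
          calc ((d : Fin (m+2)) + 1) = (((d : ℕ) + 1 : ℕ) : Fin (m+2)) := by push_cast; ring
            _ = (((x - y).val : ℕ) : Fin (m+2)) := by rw [this]
            _ = x - y := Fin.cast_val_eq_self _
        have hmem : x - ((d : Fin (m+2)) + 1) ∈ S.erase x := by
          rw [hcast]
          have : x - (x - y) = y := by ring
          rw [this]; exact hy
        have h := add_back d (S.erase x) x hT (Finset.notMem_erase x S) hmem
        rwa [Finset.insert_erase hx] at h

lemma evalA (m : ℕ) (w : List (Fin 4)) (S : Finset (Fin (m+2))) :
    (witnessA m).evalFrom S w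
      = Finset.univ.filter (fun j => (witnessM m).evalFrom j w.reverse ∈ S) := by
  induction w generalizing S with
  | nil => ext j; rw [Finset.mem_filter]; simp [DFA.evalFrom]
  | cons a w ih =>
    have h0 : (witnessA m).evalFrom S (a::w) = (witnessA m).evalFrom ((witnessA m).step S a) w := rfl
    rw [h0, ih]
    ext j
    rw [Finset.mem_filter, Finset.mem_filter, mem_stepA]
    simp [List.reverse_cons, DFA.evalFrom_append_singleton]

lemma evalM_replicate (m : ℕ) (k : ℕ) (i : Fin (m+2)) :
    (witnessM m).evalFrom i (List.replicate k 0) = i + (k : Fin (m+2)) := by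
  induction k generalizing i with
  | zero => simp [DFA.evalFrom]
  | succ k ih =>
    rw [List.replicate_succ]
    have h0 : (witnessM m).evalFrom i (0 :: List.replicate k 0)
        = (witnessM m).evalFrom ((witnessM m).step i 0) (List.replicate k 0) := rfl
    rw [h0, stepM_zero, ih]
    push_cast
    ring


theorem witnessA_minimal (m : ℕ) :
    (witnessA m).accepts = revLang (witnessM m).accepts ∧
    (∀ S : Finset (Fin (m + 2)), ∃ w : List (Fin 4), (witnessA m).eval w = S) ∧
    (∀ S T : Finset (Fin (m + 2)), S ≠ T →
      ∃ w : List (Fin 4),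
        ¬(((witnessA m).evalFrom S w ∈ (witnessA m).accept) ↔
          ((witnessA m).evalFrom T w ∈ (witnessA m).accept))) := by
  have hz : ((0 : Fin (m+2))) = ⟨0, by omega⟩ := rfl
  have compute : ∀ (U : Finset (Fin (m+2))) (k : ℕ),
      ((witnessA m).evalFrom U (List.replicate k 0) ∈ (witnessA m).accept)
        ↔ ((k : Fin (m+2)) ∈ U) := by
    intro U k
    change (⟨0, by omega⟩ : Fin (m+2)) ∈ (witnessA m).evalFrom U (List.replicate k 0) ↔ _
    rw [evalA]
    simp only [Finset.mem_filter, Finset.mem_univ, true_and]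
    rw [List.reverse_replicate, evalM_replicate, ← hz, zero_add]
  refine ⟨?_, fun S => reach_all m S, ?_⟩
  · ext w
    change _ ↔ w.reverse ∈ (witnessM m).accepts
    rw [DFA.mem_accepts, DFA.mem_accepts]
    change (⟨0, by omega⟩ : Fin (m+2)) ∈ (witnessA m).evalFrom (witnessA m).start w ↔ _
    rw [evalA]
    simp only [Finset.mem_filter, Finset.mem_univ, true_and]
    change _ ∈ ({⟨m+1, by omega⟩} : Finset (Fin (m+2))) ↔ _
    rw [Finset.mem_singleton]
    change _ ↔ _ ∈ ({⟨m+1, by omega⟩} : Set (Fin (m+2)))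
    rw [Set.mem_singleton_iff]
    rfl
  · intro S T hST
    have hex : ∃ x : Fin (m+2), ¬(x ∈ S ↔ x ∈ T) := by
      by_contra h
      push_neg at h
      exact hST (Finset.ext h)
    obtain ⟨x, hx⟩ := hex
    refine ⟨List.replicate x.val 0, ?_⟩
    rw [compute S x.val, compute T x.val, Fin.cast_val_eq_self]
    exact hx
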